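/- Define the bough decomposition procedure on a rooted tree T: repeatedly remove all boughs (maximal paths from a leaf upward ending at the first vertex that has a sibling, or at the root if T is a path). Then after each iteration, the number of leaves of the remaining tree is at most half the number of leaves before the iteration. -/

import Mathlib

/-- Descendants of `v` (including `v` itself) in the rooted tree given by `parent`. -/
def desc {V : Type*} (parent : V → V) (v : V) : Set V :=
  {x | Relation.ReflTransGen (fun a b => parent a = b) x v}

/-- The children of a vertex `x` in the rooted tree given by `parent`. -/
def children {V : Type*} (parent : V → V) (x : V) : Set V :=
  {c | c ≠ x ∧ parent c = x}

/-- `v` lies on a bough: the subtree rooted at `v` is a path, i.e. every descendant of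
`v` has at most one child. Such vertices are exactly those removed when all boughs
(maximal leaf-to-first-branching paths) are removed. -/
def inBough {V : Type*} (parent : V → V) (v : V) : Prop :=
  ∀ x ∈ desc parent v, (children parent x).Subsingleton

/-- `x` is a leaf: it has no children. -/
def isLeaf {V : Type*} (parent : V → V) (x : V) : Prop :=
  children parent x = ∅

namespace BoughAux

variable {V : Type*} {parent : V → V} {r : V}

lemma reach_iterate {y a : V} (h : Relation.ReflTransGen (fun a b => parent a = b) y a) :
    ∃ n, parent^[n] y = a := by
  induction h with
  | refl => exact ⟨0, rfl⟩
  | tail h step ih =>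
      obtain ⟨n, hn⟩ := ih
      exact ⟨n + 1, by rw [Function.iterate_succ_apply', hn, step]⟩

lemma iterate_reach (n : ℕ) (x : V) :
    Relation.ReflTransGen (fun a b => parent a = b) x (parent^[n] x) := by
  induction n with
  | zero => exact Relation.ReflTransGen.refl
  | succ n ih =>
      rw [Function.iterate_succ_apply']
      exact ih.tail rfl

variable (hroot : parent r = r)
  (hreach : ∀ x, Relation.ReflTransGen (fun a b => parent a = b) x r)

noncomputable def depth (x : V) : ℕ := sInf {n | parent^[n] x = r}

include hreach in
lemma depth_spec (x : V) : parent^[depth (r := r) (parent := parent) x] x = r := by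
  have h : {n | parent^[n] x = r}.Nonempty := reach_iterate (hreach x)
  exact Nat.sInf_mem h

include hroot hreach in
lemma child_depth {c x : V} (hc : parent c = x) (hne : c ≠ x) :
    depth (r := r) (parent := parent) x < depth (r := r) (parent := parent) c := by
  have hcr : c ≠ r := by
    intro h
    apply hne
    rw [h, ← hc, h, hroot]
  have hd0 : depth (r := r) (parent := parent) c ≠ 0 := by
    intro h0
    have := depth_spec hreach c
    rw [h0] at this
    exact hcr this
  obtain ⟨k, hk⟩ := Nat.exists_eq_succ_of_ne_zero hd0
  have hxk : parent^[k] x = r := by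
    have := depth_spec hreach c
    rw [hk, Function.iterate_succ_apply, hc] at this
    exact this
  have : depth (r := r) (parent := parent) x ≤ k := Nat.sInf_le hxk
  omega

include hroot hreach in
lemma reach_depth_le {y a : V}
    (h : Relation.ReflTransGen (fun a b => parent a = b) y a) :
    depth (r := r) (parent := parent) a ≤ depth (r := r) (parent := parent) y := by
  induction h with
  | refl => exact le_refl _
  | tail h step ih =>
      rename_i b c
      by_cases hbc : b = c
      · subst hbc; exact ih
      · have := child_depth hroot hreach step hbc
        omega

include hroot hreach in
lemma no_desc_cycle {c x : V} (hc : parent c = x) (hne : c ≠ x) :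
    x ∉ desc parent c := by
  intro hmem
  have h1 := reach_depth_le hroot hreach hmem
  have h2 := child_depth hroot hreach hc hne
  omega

lemma desc_trans {x v w : V} (h1 : x ∈ desc parent v) (h2 : v ∈ desc parent w) :
    x ∈ desc parent w := Relation.ReflTransGen.trans h1 h2

lemma child_mem_desc {c x : V} (hc : c ∈ children parent x) : c ∈ desc parent x :=
  Relation.ReflTransGen.single hc.2

include hroot hreach in
lemma exists_leaf [Fintype V] (v : V) : ∃ l ∈ desc parent v, isLeaf parent l := by
  have main : ∀ n v, (desc parent v).ncard ≤ n → ∃ l ∈ desc parent v, isLeaf parent l := by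
    intro n
    induction n with
    | zero =>
        intro v hv
        have : v ∈ desc parent v := Relation.ReflTransGen.refl
        have hfin : (desc parent v).Finite := Set.toFinite _
        have := Set.ncard_pos (s := desc parent v) hfin |>.mpr ⟨v, this⟩
        omega
    | succ n ih =>
        intro v hv
        by_cases hleaf : children parent v = ∅
        · exact ⟨v, Relation.ReflTransGen.refl, hleaf⟩
        · obtain ⟨c, hc⟩ := Set.nonempty_iff_ne_empty.mpr hleaf
          have hsub : desc parent c ⊆ desc parent v :=
            fun x hx => desc_trans hx (child_mem_desc hc)
          have hss : desc parent c ⊂ desc parent v :=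
            ⟨hsub, fun h => no_desc_cycle hroot hreach hc.2 hc.1
              (h Relation.ReflTransGen.refl)⟩
          have hlt : (desc parent c).ncard < (desc parent v).ncard :=
            Set.ncard_lt_ncard hss (Set.toFinite _)
          obtain ⟨l, hl, hleafl⟩ := ih c (by omega)
          exact ⟨l, hsub hl, hleafl⟩
  exact main (desc parent v).ncard v le_rfl

lemma desc_comparable {y a b : V} (ha : y ∈ desc parent a) (hb : y ∈ desc parent b) :
    a ∈ desc parent b ∨ b ∈ desc parent a := by
  obtain ⟨k1, hk1⟩ := reach_iterate ha
  obtain ⟨k2, hk2⟩ := reach_iterate hb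
  rcases le_total k1 k2 with h | h
  · left
    have : parent^[k2 - k1] a = b := by
      rw [← hk1, ← Function.iterate_add_apply, Nat.sub_add_cancel h, hk2]
    exact this ▸ iterate_reach (k2 - k1) a
  · right
    have : parent^[k1 - k2] b = a := by
      rw [← hk2, ← Function.iterate_add_apply, Nat.sub_add_cancel h, hk1]
    exact this ▸ iterate_reach (k1 - k2) b

include hroot hreach in
lemma sibling_desc_disjoint {c1 c2 x y : V} (h1 : c1 ∈ children parent x)
    (h2 : c2 ∈ children parent x) (hne : c1 ≠ c2)
    (hy1 : y ∈ desc parent c1) (hy2 : y ∈ desc parent c2) : False := by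
  have key : ∀ a b : V, a ∈ children parent x → b ∈ children parent x → a ≠ b →
      a ∈ desc parent b → False := by
    intro a b ha hb hab hd
    rcases Relation.ReflTransGen.cases_head hd with heq | ⟨m, hm, hmr⟩
    · exact hab heq
    · have : m = x := by simpa using ha.2 ▸ hm.symm
      subst this
      exact no_desc_cycle hroot hreach hb.2 hb.1 hmr
  rcases desc_comparable hy1 hy2 with h | h
  · exact key c1 c2 h1 h2 hne h
  · exact key c2 c1 h2 h1 (Ne.symm hne) h

lemma desc_through_child {v w : V} (h : v ∈ desc parent w) (hne : v ≠ w) :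
    ∃ c ∈ children parent w, v ∈ desc parent c := by
  induction h with
  | refl => exact absurd rfl hne
  | tail h step ih =>
      rename_i b c
      by_cases hbc : b = c
      · subst hbc; exact ih hne
      · exact ⟨b, ⟨hbc, step⟩, h⟩

lemma inBough_of_desc {v c : V} (h : inBough parent c) (hd : v ∈ desc parent c) :
    inBough parent v := fun x hx => h x (desc_trans hx hd)

end BoughAux

/-- Removing all boughs of a rooted tree at least halves the number of leaves:
the leaves of the remaining tree (surviving vertices all of whose children were
removed) number at most half the leaves of the original tree. -/
theorem bough_removal_halves_leaves {V : Type*} [Fintype V]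
    (parent : V → V) (r : V) (hroot : parent r = r)
    (hreach : ∀ x, Relation.ReflTransGen (fun a b => parent a = b) x r) :
    2 * Set.ncard {v | ¬ inBough parent v ∧ ∀ c ∈ children parent v, inBough parent c}
      ≤ Set.ncard {v | isLeaf parent v} := by
  classical
  set NL : Set V := {v | ¬ inBough parent v ∧ ∀ c ∈ children parent v, inBough parent c}
    with hNL
  set L : Set V := {v | isLeaf parent v} with hL
  -- each new leaf has two distinct leaves in its subtree
  have key : ∀ v ∈ NL, ∃ l1 l2 : V, l1 ≠ l2 ∧ l1 ∈ desc parent v ∧ l2 ∈ desc parent v ∧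
      isLeaf parent l1 ∧ isLeaf parent l2 := by
    intro v hv
    obtain ⟨hnb, -⟩ := hv
    rw [inBough] at hnb
    push_neg at hnb
    obtain ⟨x, hx, hns⟩ := hnb
    obtain ⟨c1, hc1, c2, hc2, hc12⟩ := hns
    obtain ⟨l1, hl1, hleaf1⟩ := BoughAux.exists_leaf hroot hreach c1
    obtain ⟨l2, hl2, hleaf2⟩ := BoughAux.exists_leaf hroot hreach c2
    refine ⟨l1, l2, ?_, ?_, ?_, hleaf1, hleaf2⟩
    · rintro rfl
      exact BoughAux.sibling_desc_disjoint hroot hreach hc1 hc2 hc12 hl1 hl2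
    · exact BoughAux.desc_trans (BoughAux.desc_trans hl1 (BoughAux.child_mem_desc hc1)) hx
    · exact BoughAux.desc_trans (BoughAux.desc_trans hl2 (BoughAux.child_mem_desc hc2)) hx
  -- subtrees of distinct new leaves are disjoint
  have disj : ∀ v ∈ NL, ∀ w ∈ NL, v ≠ w → ∀ y, y ∈ desc parent v → y ∈ desc parent w →
      False := by
    have half : ∀ v ∈ NL, ∀ w ∈ NL, v ≠ w → v ∈ desc parent w → False := by
      intro v hv w hw hvw hd
      obtain ⟨c, hc, hvc⟩ := BoughAux.desc_through_child hd hvw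
      exact hv.1 (BoughAux.inBough_of_desc (hw.2 c hc) hvc)
    intro v hv w hw hvw y hy1 hy2
    rcases BoughAux.desc_comparable hy1 hy2 with h | h
    · exact half v hv w hw hvw h
    · exact half w hw v hv (Ne.symm hvw) h
  choose l1 l2 hne hd1 hd2 hleaf1 hleaf2 using key
  -- the injection
  set F : ↥NL × Bool → ↥L := fun p =>
    if p.2 then ⟨l1 p.1 p.1.2, hleaf1 p.1 p.1.2⟩ else ⟨l2 p.1 p.1.2, hleaf2 p.1 p.1.2⟩
    with hF
  have hmem : ∀ (p : ↥NL × Bool), (F p : V) ∈ desc parent (p.1 : V) := by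
    rintro ⟨v, b⟩
    cases b <;> simp [hF, hd1, hd2, v.2]
  have hinj : Function.Injective F := by
    rintro ⟨⟨v, hv⟩, b⟩ ⟨⟨w, hw⟩, b'⟩ heq
    have hvw : v = w := by
      by_contra hvw
      have h1 := hmem (⟨⟨v, hv⟩, b⟩)
      have h2 := hmem (⟨⟨w, hw⟩, b'⟩)
      rw [heq] at h1
      exact disj v hv w hw hvw _ h1 h2
    subst hvw
    have hval : (F (⟨⟨v, hv⟩, b⟩)).1 = (F (⟨⟨v, hv⟩, b'⟩)).1 := congrArg Subtype.val heq
    simp only [hF] at hval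
    cases b <;> cases b'
    · rfl
    · simp only [if_true, if_false, Bool.false_eq_true, reduceIte] at hval
      exact absurd hval.symm (hne v hv)
    · simp only [if_true, if_false, Bool.false_eq_true, reduceIte] at hval
      exact absurd hval (hne v hv)
    · rfl
  have hcard : Nat.card (↥NL × Bool) ≤ Nat.card ↥L :=
    Nat.card_le_card_of_injective F hinj
  rw [Nat.card_prod, Nat.card_eq_fintype_card (α := Bool), Nat.card_coe_set_eq,
    Nat.card_coe_set_eq] at hcard
  simp only [Fintype.card_bool] at hcard
  omega
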